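/- Let γ > 0, b > p₂/γ, p > 0, p₂ ≥ p, q_max > b + p/γ. Suppose the consumer reports baseline b̂ with b - p₂/γ ≤ b̂ ≤ q_max and reduced consumption q̂ with b - 2p₂/γ ≤ q̂ ≤ min(b̂, b). Then the maximizer of H(q) = G(q) - pq + p₂·max(b̂ - q, 0) - p₂·|q - q̂| over q ∈ [0, q_max] is q* = q̂, where G is the piecewise-quadratic utility with parameters γ, b, p. -/

import Mathlib

open Set

set_option maxHeartbeats 2000000 in
/-- when called, the maximizer of
H(q) = G(q) - pq + p₂·max(bhat - q, 0) - p₂·|q - qhat| over [0, q_max] is q* = qhat. -/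
theorem stmt3 (γ b p p₂ qmax bhat qhat : ℝ) (hγ : 0 < γ) (hb : p₂/γ < b) (hp : 0 < p)
    (hp₂ : p ≤ p₂) (hqmax : b + p / γ < qmax)
    (hbhatl : b - p₂/γ ≤ bhat) (hbhatu : bhat ≤ qmax)
    (hqhatl : b - 2*p₂/γ ≤ qhat) (hqhatu : qhat ≤ min bhat b)
    (G : ℝ → ℝ)
    (hG : ∀ q, G q = if q ≤ b + p / γ then -γ/2 * q^2 + (γ*b + p) * q
                     else p^2/(2*γ) + γ*b^2/2 + p*b) :
    IsMaxOn (fun q => G q - p*q + p₂ * max (bhat - q) 0 - p₂ * |q - qhat|)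
      (Set.Icc 0 qmax) qhat := by
  have hγ' : (γ:ℝ) ≠ 0 := hγ.ne'
  have hpc : p = γ * (p/γ) := (mul_div_cancel₀ p hγ').symm
  have hpd : p₂ = γ * (p₂/γ) := (mul_div_cancel₀ p₂ hγ').symm
  set c := p/γ with hc
  set d := p₂/γ with hd
  have hc0 : 0 < c := div_pos hp hγ
  have hd0 : 0 < d := div_pos (hp.trans_le hp₂) hγ
  have hcd : c ≤ d := by rw [hc, hd]; gcongr
  have hP : p^2/(2*γ) = γ*(c^2/2) := by rw [hpc]; field_simp
  have h2d : 2*p₂/γ = 2*d := by rw [hd]; ring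
  rw [h2d] at hqhatl
  have hqb : qhat ≤ b := hqhatu.trans (min_le_right _ _)
  have hqbhat : qhat ≤ bhat := hqhatu.trans (min_le_left _ _)
  rw [isMaxOn_iff]
  intro q hq
  obtain ⟨hq0, hqmx⟩ := hq
  rw [hG q, hG qhat, if_pos (hqb.trans (le_add_of_nonneg_right hc0.le)),
    max_eq_left (sub_nonneg.mpr hqbhat), sub_self, abs_zero]
  rcases le_or_gt q qhat with h1 | h1
  · -- q ≤ qhat ≤ b ≤ b + c
    rw [if_pos (h1.trans (hqb.trans (le_add_of_nonneg_right hc0.le))),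
      max_eq_left (sub_nonneg.mpr (h1.trans hqbhat)),
      abs_of_nonpos (sub_nonpos.mpr h1)]
    have key : -q^2/2 + b*q + d*(bhat-q) - d*(qhat-q) ≤ -qhat^2/2 + b*qhat + d*(bhat-qhat) := by
      nlinarith [mul_nonneg (sub_nonneg.mpr h1) (by linarith : (0:ℝ) ≤ 2*b - q - qhat)]
    have := mul_le_mul_of_nonneg_left key hγ.le
    rw [hpc, hpd]; nlinarith [this]
  · rw [abs_of_nonneg (sub_nonneg.mpr h1.le)]
    rcases le_or_gt q bhat with h2 | h2
    · -- qhat < q ≤ bhat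
      rw [max_eq_left (sub_nonneg.mpr h2)]
      rcases le_or_gt q (b + c) with h3 | h3
      · rw [if_pos h3]
        have key : -q^2/2 + b*q + d*(bhat-q) - d*(q-qhat) ≤ -qhat^2/2 + b*qhat + d*(bhat-qhat) := by
          nlinarith [mul_nonneg (sub_nonneg.mpr h1.le) (sub_nonneg.mpr hqhatl),
            sq_nonneg (q - qhat)]
        have := mul_le_mul_of_nonneg_left key hγ.le
        rw [hpc, hpd]; nlinarith [this]
      · rw [if_neg (not_le.mpr h3), hP]
        have key : c^2/2 + b^2/2 + c*b - c*q + d*(bhat-q) - d*(q-qhat)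
            ≤ -qhat^2/2 + b*qhat + d*(bhat-qhat) := by
          nlinarith [mul_nonneg (sub_nonneg.mpr h3.le) (by linarith : (0:ℝ) ≤ b - qhat + c),
            mul_nonneg (sub_nonneg.mpr h1.le) (sub_nonneg.mpr hqhatl),
            sq_nonneg (b + c - qhat)]
        have := mul_le_mul_of_nonneg_left key hγ.le
        rw [hpc, hpd]; nlinarith [this]
    · -- bhat < q
      rw [max_eq_right (sub_nonpos.mpr h2.le)]
      rcases le_or_gt q (b + c) with h3 | h3
      · rw [if_pos h3]
        have key : -q^2/2 + b*q - d*(q-qhat) ≤ -qhat^2/2 + b*qhat + d*(bhat-qhat) := by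
          nlinarith [mul_nonneg (sub_nonneg.mpr h2.le) (sub_nonneg.mpr hbhatl),
            mul_nonneg (sub_nonneg.mpr hqbhat) (sub_nonneg.mpr hqhatl),
            sq_nonneg (q - bhat), sq_nonneg (bhat - qhat)]
        have := mul_le_mul_of_nonneg_left key hγ.le
        rw [hpc, hpd]; nlinarith [this]
      · rw [if_neg (not_le.mpr h3), hP]
        have key : c^2/2 + b^2/2 + c*b - c*q - d*(q-qhat)
            ≤ -qhat^2/2 + b*qhat + d*(bhat-qhat) := by
          rcases le_or_gt bhat (b + c) with h4 | h4
          · nlinarith [mul_nonneg (sub_nonneg.mpr h3.le) (by linarith : (0:ℝ) ≤ b + c - bhat),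
              mul_nonneg (sub_nonneg.mpr h2.le) (sub_nonneg.mpr hbhatl),
              mul_nonneg (sub_nonneg.mpr hqbhat) (sub_nonneg.mpr hqhatl),
              sq_nonneg (b + c - bhat), sq_nonneg (bhat - qhat)]
          · nlinarith [mul_nonneg (sub_nonneg.mpr h2.le) (by linarith : (0:ℝ) ≤ c + d),
              mul_nonneg (sub_nonneg.mpr h4.le) (by linarith : (0:ℝ) ≤ b - qhat + c),
              mul_nonneg (sub_nonneg.mpr hqbhat) (sub_nonneg.mpr hqhatl),
              sq_nonneg (b + c - qhat)]
        have := mul_le_mul_of_nonneg_left key hγ.le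
        rw [hpc, hpd]; nlinarith [this]
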